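/- Let d ≥ 1 be an integer and α ≥ 16d a real number. Then ∫_0^{1/2} exp(−α r) r^{d−1} dr ≤ (1 + 2·exp(−d)) · ∫_0^{1/4} exp(−α r) r^{d−1} dr. -/
import Mathlib

open Real MeasureTheory intervalIntegral

/-- Lemma on incomplete Gamma integrals: for an integer `d ≥ 1` and
`α ≥ 16d`, `∫_0^{1/2} e^{-αr} r^{d-1} dr ≤ (1 + 2e^{-d}) ∫_0^{1/4} e^{-αr} r^{d-1} dr`. -/
theorem incomplete_gamma_comparison (d : ℕ) (hd : 1 ≤ d)
    (α : ℝ) (hα : 16 * (d : ℝ) ≤ α) :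
    (∫ r in (0 : ℝ)..(1 / 2), Real.exp (-(α * r)) * r ^ (d - 1)) ≤
      (1 + 2 * Real.exp (-(d : ℝ))) *
        ∫ r in (0 : ℝ)..(1 / 4), Real.exp (-(α * r)) * r ^ (d - 1) := by
  have hd1 : (1 : ℝ) ≤ (d : ℝ) := by exact_mod_cast hd
  have hα0 : (0 : ℝ) ≤ α := le_trans (by positivity) hα
  set f : ℝ → ℝ := fun r => Real.exp (-(α * r)) * r ^ (d - 1) with hf
  have hcont : Continuous f := by
    apply Continuous.mul
    · exact Real.continuous_exp.comp (by continuity)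
    · continuity
  have hint : ∀ a b : ℝ, IntervalIntegrable f volume a b := fun a b =>
    hcont.intervalIntegrable a b
  -- split the integral
  have hsplit : (∫ r in (0:ℝ)..(1/2), f r)
      = (∫ r in (0:ℝ)..(1/4), f r) + ∫ r in (1/4:ℝ)..(1/2), f r :=
    (intervalIntegral.integral_add_adjacent_intervals (hint 0 (1/4)) (hint (1/4) (1/2))).symm
  have hsplit2 : (∫ r in (0:ℝ)..(1/4), f r)
      = (∫ r in (0:ℝ)..(1/8), f r) + ∫ r in (1/8:ℝ)..(1/4), f r :=
    (intervalIntegral.integral_add_adjacent_intervals (hint 0 (1/8)) (hint (1/8) (1/4))).symm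
  -- substitution r = 2 s
  have hsub : (∫ r in (1/4:ℝ)..(1/2), f r) = 2 * ∫ s in (1/8:ℝ)..(1/4), f (2 * s) := by
    have h := intervalIntegral.integral_comp_mul_left (a := (1/8:ℝ)) (b := (1/4:ℝ)) f
      (two_ne_zero (α := ℝ))
    rw [h]
    norm_num
    ring
  -- pointwise bound on [1/8, 1/4]
  have hpt : ∀ s ∈ Set.Icc (1/8:ℝ) (1/4),
      2 * f (2 * s) ≤ (2 * Real.exp (-(d:ℝ))) * f s := by
    rintro s ⟨hs1, hs2⟩
    have hs0 : (0:ℝ) ≤ s := le_trans (by norm_num) hs1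
    have hαs : 2 * (d:ℝ) ≤ α * s := by
      have : 16 * (d:ℝ) * (1/8) ≤ α * s :=
        mul_le_mul hα hs1 (by norm_num) hα0
      linarith
    have h2e : (2:ℝ) ^ (d - 1) ≤ Real.exp (d:ℝ) := by
      calc (2:ℝ) ^ (d - 1) ≤ (2:ℝ) ^ d :=
            pow_le_pow_right₀ (by norm_num) (Nat.sub_le d 1)
        _ ≤ Real.exp 1 ^ d :=
            pow_le_pow_left₀ (by norm_num) (by
              have := Real.add_one_le_exp (1:ℝ); linarith) d
        _ = Real.exp (d:ℝ) := by
            rw [← Real.exp_nat_mul, mul_one]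
    have hexp2 : Real.exp (-(α * s)) ≤ Real.exp (-(2 * (d:ℝ))) :=
      Real.exp_le_exp.mpr (by linarith)
    have key : (2:ℝ) ^ (d - 1) * Real.exp (-(α * s)) ≤ Real.exp (-(d:ℝ)) := by
      calc (2:ℝ) ^ (d - 1) * Real.exp (-(α * s))
          ≤ Real.exp (d:ℝ) * Real.exp (-(2 * (d:ℝ))) :=
            mul_le_mul h2e hexp2 (Real.exp_pos _).le (Real.exp_pos _).le
        _ = Real.exp (-(d:ℝ)) := by rw [← Real.exp_add]; ring_nf
    have hesplit : Real.exp (-(α * (2 * s)))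
        = Real.exp (-(α * s)) * Real.exp (-(α * s)) := by
      rw [← Real.exp_add]; ring_nf
    simp only [hf]
    rw [hesplit, mul_pow]
    have hE : (0:ℝ) < Real.exp (-(α * s)) := Real.exp_pos _
    have hS : (0:ℝ) ≤ s ^ (d - 1) := pow_nonneg hs0 _
    nlinarith [mul_le_mul_of_nonneg_right key (mul_nonneg hE.le hS),
      mul_nonneg hE.le hS]
  -- integrate the pointwise bound
  have hc2 : Continuous (fun s : ℝ => 2 * f (2 * s)) := by
    exact continuous_const.mul (hcont.comp (continuous_const.mul continuous_id))
  have hmono : (∫ s in (1/8:ℝ)..(1/4), 2 * f (2 * s))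
      ≤ ∫ s in (1/8:ℝ)..(1/4), (2 * Real.exp (-(d:ℝ))) * f s :=
    intervalIntegral.integral_mono_on (by norm_num)
      (hc2.intervalIntegrable _ _)
      ((continuous_const.mul hcont).intervalIntegrable _ _) hpt
  rw [intervalIntegral.integral_const_mul, intervalIntegral.integral_const_mul] at hmono
  -- nonnegativity of the piece on [0, 1/8]
  have hnn : (0:ℝ) ≤ ∫ r in (0:ℝ)..(1/8), f r := by
    apply intervalIntegral.integral_nonneg (by norm_num)
    intro x hx
    exact mul_nonneg (Real.exp_pos _).le (pow_nonneg hx.1 _)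
  have hepos : (0:ℝ) < Real.exp (-(d:ℝ)) := Real.exp_pos _
  -- combine
  have hmid : (∫ r in (1/4:ℝ)..(1/2), f r)
      ≤ 2 * Real.exp (-(d:ℝ)) * ∫ r in (0:ℝ)..(1/4), f r := by
    rw [hsub]
    calc 2 * ∫ s in (1/8:ℝ)..(1/4), f (2 * s)
        ≤ 2 * (Real.exp (-(d:ℝ)) * ∫ s in (1/8:ℝ)..(1/4), f s) := by linarith
      _ ≤ 2 * Real.exp (-(d:ℝ)) * ∫ r in (0:ℝ)..(1/4), f r := by
          rw [hsplit2]; nlinarith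
  rw [hsplit]
  nlinarith [hmid]
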